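/- Let δ be the derivation of the polynomial ring ℤ[x,g] determined by δ(x) = g² and δ(g) = xg. Then for every n ≥ 0, evaluating at x = 1, g = 1 gives δ^n(g)(1,1) = n! and δ^n(x)(1,1) = n!. (That is, the sums of the integer coefficients of δ^n(g) and of δ^n(x) both equal n!.) -/

import Mathlib

open MvPolynomial

/-- If `δ` is the derivation of `ℤ[x,g]` with `δ(x) = g²` and `δ(g) = xg`, then for every
`n ≥ 0`, evaluating at `x = 1, g = 1` gives `δ^n(g)(1,1) = n!` and `δ^n(x)(1,1) = n!`;
i.e. the sums of the integer coefficients of `δ^n(g)` and of `δ^n(x)` both equal `n!`. -/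
theorem eval_delta_factorial
    (δ : Derivation ℤ (MvPolynomial (Fin 2) ℤ) (MvPolynomial (Fin 2) ℤ))
    (hx : δ (MvPolynomial.X 0) = MvPolynomial.X 1 ^ 2)
    (hg : δ (MvPolynomial.X 1) = MvPolynomial.X 0 * MvPolynomial.X 1) :
    ∀ n : ℕ,
      MvPolynomial.eval (fun _ => (1 : ℤ)) ((⇑δ)^[n] (MvPolynomial.X 1)) = n.factorial ∧
      MvPolynomial.eval (fun _ => (1 : ℤ)) ((⇑δ)^[n] (MvPolynomial.X 0)) = n.factorial := by
  set f : Fin 2 → MvPolynomial (Fin 2) ℤ := ![X 1 ^ 2, X 0 * X 1] with hf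
  have hδ : δ = mkDerivation ℤ f := by
    apply derivation_ext
    intro i
    fin_cases i <;> simp [hf, hx, hg, mkDerivation_X]
  have hf1 : ∀ i : Fin 2, eval (fun _ => (1 : ℤ)) (f i) = 1 := by
    intro i; fin_cases i <;> simp [hf]
  have hfh : ∀ i : Fin 2, (f i).IsHomogeneous 2 := by
    intro i
    fin_cases i
    · simpa [hf] using isHomogeneous_X_pow (R := ℤ) (1 : Fin 2) 2
    · simpa [hf] using (isHomogeneous_X ℤ (0 : Fin 2)).mul (isHomogeneous_X ℤ (1 : Fin 2))
  -- key Euler-type lemma on monomials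
  have hdeg : ∀ (s : Fin 2 →₀ ℕ) (i : Fin 2), i ∈ s.support →
      (s - Finsupp.single i 1).degree + 1 = s.degree := by
    intro s i hi
    have hle : Finsupp.single i 1 ≤ s := by
      rw [Finsupp.single_le_iff]
      exact Nat.one_le_iff_ne_zero.2 (Finsupp.mem_support_iff.1 hi)
    have heq : (s - Finsupp.single i 1) + Finsupp.single i 1 = s := tsub_add_cancel_of_le hle
    have hsing : (Finsupp.single i 1).degree = 1 := by
      simp [Finsupp.degree_eq_weight_one, Finsupp.weight_apply, Finsupp.sum_single_index]
    rw [Finsupp.degree_eq_weight_one] at hsing ⊢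
    conv_rhs => rw [← heq]
    rw [map_add, hsing]
  have keymono : ∀ (s : Fin 2 →₀ ℕ) (c : ℤ),
      (δ (monomial s c)).IsHomogeneous (s.degree + 1) ∧
      eval (fun _ => (1 : ℤ)) (δ (monomial s c)) = c * s.degree := by
    intro s c
    have hform : δ (monomial s c)
        = c • s.sum fun i k => monomial (s - Finsupp.single i 1) (k : ℤ) • f i := by
      rw [hδ]
      exact mkDerivationₗ_monomial f s c
    rw [hform]
    constructor
    · rw [Finsupp.smul_sum]
      apply IsHomogeneous.sum
      intro i hi
      dsimp only
      have h1 : (monomial (s - Finsupp.single i 1) ((s i : ℤ))).IsHomogeneous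
          (s - Finsupp.single i 1).degree := isHomogeneous_monomial _ rfl
      have h2 := h1.mul (hfh i)
      have h3 : ((monomial (s - Finsupp.single i 1) ((s i : ℤ))) * f i).IsHomogeneous
          (s.degree + 1) := by
        rw [← hdeg s i hi]
        exact h2
      rw [← mem_homogeneousSubmodule] at h3 ⊢
      rw [smul_eq_mul]
      exact Submodule.smul_mem _ c h3
    · rw [Finsupp.smul_sum, Finsupp.sum, map_sum]
      have : ∀ i ∈ s.support, eval (fun _ => (1 : ℤ))
          (c • (monomial (s - Finsupp.single i 1) ((s i : ℤ)) • f i)) = c * s i := by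
        intro i hi
        rw [zsmul_eq_mul, smul_eq_mul, map_mul, map_mul, hf1 i, eval_monomial]
        simp [Finsupp.prod]
      rw [Finset.sum_congr rfl this, ← Finset.mul_sum]
      congr 1
      rw [Finsupp.degree]
      push_cast
      exact (Nat.cast_sum s.support fun i => s i).symm
  -- key lemma on homogeneous polynomials
  have key : ∀ (d : ℕ) (p : MvPolynomial (Fin 2) ℤ), p.IsHomogeneous d →
      (δ p).IsHomogeneous (d + 1) ∧
      eval (fun _ => (1 : ℤ)) (δ p) = d * eval (fun _ => (1 : ℤ)) p := by
    intro d p hp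
    have hps : δ p = ∑ v ∈ p.support, δ (monomial v (coeff v p)) := by
      conv_lhs => rw [p.as_sum]
      exact map_sum δ.toLinearMap _ _
    constructor
    · rw [hps]
      apply IsHomogeneous.sum
      intro v hv
      have hvd : v.degree = d := by
        rw [Finsupp.degree_eq_weight_one]; exact hp (Finsupp.mem_support_iff.1 hv)
      simpa [hvd] using (keymono v (coeff v p)).1
    · rw [hps, map_sum]
      have : ∀ v ∈ p.support, eval (fun _ => (1 : ℤ)) (δ (monomial v (coeff v p)))
          = d * coeff v p := by
        intro v hv
        have hvd : v.degree = d := by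
          rw [Finsupp.degree_eq_weight_one]; exact hp (Finsupp.mem_support_iff.1 hv)
        rw [(keymono v (coeff v p)).2, hvd]
        ring
      rw [Finset.sum_congr rfl this, ← Finset.mul_sum]
      have hev : eval (fun _ => (1 : ℤ)) p = ∑ v ∈ p.support, coeff v p := by
        conv_lhs => rw [p.as_sum]
        rw [map_sum]
        refine Finset.sum_congr rfl fun v hv => ?_
        rw [eval_monomial]
        simp [Finsupp.prod]
      rw [hev]
  -- strengthen with homogeneity, induct
  have main : ∀ n : ℕ,
      (((⇑δ)^[n] (X 1)).IsHomogeneous (n + 1) ∧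
        eval (fun _ => (1 : ℤ)) ((⇑δ)^[n] (X 1)) = n.factorial) ∧
      (((⇑δ)^[n] (X 0)).IsHomogeneous (n + 1) ∧
        eval (fun _ => (1 : ℤ)) ((⇑δ)^[n] (X 0)) = n.factorial) := by
    intro n
    induction n with
    | zero =>
      refine ⟨⟨?_, ?_⟩, ⟨?_, ?_⟩⟩ <;>
        simp [isHomogeneous_X]
    | succ k ih =>
      obtain ⟨⟨h1h, h1e⟩, ⟨h0h, h0e⟩⟩ := ih
      rw [Function.iterate_succ_apply', Function.iterate_succ_apply']
      obtain ⟨k1h, k1e⟩ := key (k + 1) _ h1h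
      obtain ⟨k0h, k0e⟩ := key (k + 1) _ h0h
      refine ⟨⟨k1h, ?_⟩, ⟨k0h, ?_⟩⟩
      · rw [k1e, h1e, Nat.factorial_succ]; push_cast; ring
      · rw [k0e, h0e, Nat.factorial_succ]; push_cast; ring
  intro n
  exact ⟨(main n).1.2, (main n).2.2⟩
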